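/- Let p, q be probability mass functions on a finite set X with p(x) > 0 and q(x) > 0 for all x. Define L(p,q) = ∑_x [ -p(x) log( q(x)/(p(x)+q(x)) ) - q(x) log( p(x)/(p(x)+q(x)) ) ]. Then L(p,q) ≥ log 4. -/
import Mathlib


open Finset

lemma pointwise_bound (a b : ℝ) (ha : 0 < a) (hb : 0 < b) :
    (a + b) * Real.log 2 ≤ -a * Real.log (b / (a + b)) - b * Real.log (a / (a + b)) := by
  have hs : 0 < a + b := by linarith
  have h1 : Real.log (b / (a + b)) = Real.log (2 * (b / (a + b))) - Real.log 2 := by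
    rw [Real.log_mul two_ne_zero (by positivity)]; ring
  have h2 : Real.log (a / (a + b)) = Real.log (2 * (a / (a + b))) - Real.log 2 := by
    rw [Real.log_mul two_ne_zero (by positivity)]; ring
  have hb1 : Real.log (2 * (b / (a + b))) ≤ 2 * (b / (a + b)) - 1 :=
    Real.log_le_sub_one_of_pos (by positivity)
  have hb2 : Real.log (2 * (a / (a + b))) ≤ 2 * (a / (a + b)) - 1 :=
    Real.log_le_sub_one_of_pos (by positivity)
  have key : a * (2 * (b / (a + b)) - 1) + b * (2 * (a / (a + b)) - 1) ≤ 0 := by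
    have h : a * (2 * (b / (a + b)) - 1) + b * (2 * (a / (a + b)) - 1)
        = -((a - b) ^ 2 / (a + b)) := by
      field_simp
      ring
    rw [h]
    have : 0 ≤ (a - b) ^ 2 / (a + b) := by positivity
    linarith
  nlinarith [mul_le_mul_of_nonneg_left hb1 ha.le, mul_le_mul_of_nonneg_left hb2 hb.le]

/-- The symmetrized confusion loss between two strictly positive probability mass
functions on a finite set is at least `log 4`. -/
theorem stmt_5 (X : Type*) [Fintype X] [Nonempty X]
    (p q : X → ℝ) (hp : ∀ x, 0 < p x) (hq : ∀ x, 0 < q x)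
    (hps : ∑ x, p x = 1) (hqs : ∑ x, q x = 1) :
    Real.log 4 ≤
      ∑ x, (-p x * Real.log (q x / (p x + q x)) - q x * Real.log (p x / (p x + q x))) := by
  have h4 : Real.log 4 = 2 * Real.log 2 := by
    rw [show (4 : ℝ) = 2 ^ 2 by norm_num, Real.log_pow]; norm_num
  calc Real.log 4 = ∑ x, (p x + q x) * Real.log 2 := by
        rw [← Finset.sum_mul, Finset.sum_add_distrib, hps, hqs, h4]; ring
    _ ≤ _ := Finset.sum_le_sum fun x _ => pointwise_bound (p x) (q x) (hp x) (hq x)
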